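/- For any real numbers $\xi \neq 0$ and $\tau$, and any $b > 1/2$, there is a constant $C$ depending only on $b$ such that $\int_{\mathbb{R}} \frac{d\xi_1}{(1 + |\tau - \xi_1^3 - (\xi - \xi_1)^3|)^{2b}} \leq \frac{C}{\sqrt{|\xi|} (1 + |4\tau - \xi^3|)^{1/2}}$. -/

import Mathlib

open MeasureTheory Real

section helpers
open Set Module

lemma jap {r : ℝ} (hr : 1 < r) : Integrable (fun t : ℝ => (1 + |t|) ^ (-r)) := by
  have := integrable_one_add_norm (E := ℝ) (μ := volume) (r := r) (by simpa using hr)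
  simpa [Real.norm_eq_abs] using this

lemma jap2 {p : ℝ} (hp : 1/2 < p) : Integrable (fun t : ℝ => (1 + t^2) ^ (-p)) := by
  have := integrable_rpow_neg_one_add_norm_sq (E := ℝ) (μ := volume) (r := 2*p)
    (by simpa using by linarith)
  have h : -(2*p)/2 = -p := by ring
  simpa [Real.norm_eq_abs, sq_abs, h] using this

lemma scaled {p : ℝ} (hp : 1 < p) {s : ℝ} (hs : 0 < s) (c : ℝ) :
    Integrable (fun t : ℝ => (1 + |s*(t + c)|) ^ (-p)) ∧
    (∫ t : ℝ, (1 + |s*(t + c)|) ^ (-p)) = s⁻¹ * ∫ u : ℝ, (1 + |u|)^(-p) := by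
  have i1 : Integrable (fun x : ℝ => (1 + |s*x|) ^ (-p)) :=
    (jap hp).comp_mul_left' hs.ne'
  constructor
  · exact Integrable.comp_add_right i1 c
  · have h1 := integral_add_right_eq_self (μ := volume) (fun x : ℝ => (1 + |s*x|) ^ (-p)) c
    have h2 := MeasureTheory.Measure.integral_comp_mul_left (fun u : ℝ => (1 + |u|) ^ (-p)) s
    rw [abs_of_pos (inv_pos.2 hs), smul_eq_mul] at h2
    rw [h1, h2]

set_option maxHeartbeats 1000000 in
lemma core {b : ℝ} (hb : 1/2 < b) :
    ∃ C > 0, ∀ l : ℝ, (∫ t : ℝ, (1 + |l - t^2|) ^ (-(2*b))) ≤ C * (1 + |l|) ^ (-(1/2:ℝ)) := by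
  have hp : (1:ℝ) < 2*b := by linarith
  set C0 : ℝ := ∫ t : ℝ, (1 + t^2) ^ (-b) with hC0
  set M : ℝ := ∫ t : ℝ, (1 + |t|) ^ (-(2*b)) with hM
  have iC0 : Integrable (fun t : ℝ => (1 + t^2) ^ (-b)) := jap2 hb
  have hC0n : 0 ≤ C0 := integral_nonneg fun t => by positivity
  have hMn : 0 ≤ M := integral_nonneg fun t => by positivity
  have h2b : (0:ℝ) ≤ (2:ℝ)^(2*b) := by positivity
  have hsq2 : (0:ℝ) ≤ Real.sqrt 2 := Real.sqrt_nonneg 2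
  have hq1 : (0:ℝ) ≤ Real.sqrt 2 * (4 + 2^(2*b) * C0) := by positivity
  have hq2 : (0:ℝ) ≤ 2 * Real.sqrt 2 * M := by positivity
  refine ⟨C0 + Real.sqrt 2 * (4 + 2^(2*b) * C0) + 2 * Real.sqrt 2 * M + 1, by linarith, ?_⟩
  intro l
  set C : ℝ := C0 + Real.sqrt 2 * (4 + 2^(2*b) * C0) + 2 * Real.sqrt 2 * M + 1 with hCdef
  have hCpos : 0 < C := by simp only [hCdef]; linarith
  have gnn : ∀ t : ℝ, 0 ≤ (1 + |l - t^2|) ^ (-(2*b)) := fun t => by positivity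
  rcases le_or_gt l 0 with hl | hl
  · -- Case l ≤ 0
    have key : ∀ t : ℝ, (1 + |l - t^2|) ^ (-(2*b)) ≤ (1+|l|)^(-(1/2:ℝ)) * (1+t^2)^(-b) := by
      intro t
      set A : ℝ := 1 + t^2 with hA
      set K : ℝ := |l| with hK
      have hA1 : (1:ℝ) ≤ A := by simp only [hA]; nlinarith [sq_nonneg t]
      have hK0 : (0:ℝ) ≤ K := abs_nonneg l
      have e1 : 1 + |l - t^2| = A + K := by
        rw [hK, abs_of_nonpos (by nlinarith [sq_nonneg t] : l - t^2 ≤ 0), abs_of_nonpos hl]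
        simp only [hA]; ring
      rw [e1]
      have hprod : A^b * (1+K)^b ≤ (A+K)^(2*b) := by
        have h1 : A * (1+K) ≤ (A+K)^2 := by nlinarith
        have h2 : (A*(1+K))^b ≤ ((A+K)^2)^b :=
          Real.rpow_le_rpow (by positivity) h1 (by linarith)
        have h3 : ((A+K)^2)^b = (A+K)^(2*b) := by
          rw [← Real.rpow_natCast (A+K) 2, ← Real.rpow_mul (by positivity)]
          norm_num
        rw [← h3, ← Real.mul_rpow (by positivity) (by positivity)]
        exact h2
      have step1 : (A+K)^(-(2*b)) ≤ A^(-b) * (1+K)^(-b) := by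
        rw [Real.rpow_neg (by positivity), Real.rpow_neg (by positivity),
          Real.rpow_neg (by positivity), ← mul_inv]
        exact inv_anti₀ (by positivity) hprod
      have step2 : (1+K)^(-b) ≤ (1+K)^(-(1/2:ℝ)) :=
        Real.rpow_le_rpow_of_exponent_le (by linarith) (by linarith)
      calc (A+K)^(-(2*b)) ≤ A^(-b) * (1+K)^(-b) := step1
        _ ≤ A^(-b) * (1+K)^(-(1/2:ℝ)) :=
            mul_le_mul_of_nonneg_left step2 (by positivity)
        _ = (1+K)^(-(1/2:ℝ)) * A^(-b) := mul_comm _ _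
    calc (∫ t : ℝ, (1 + |l - t^2|) ^ (-(2*b)))
        ≤ ∫ t : ℝ, (1+|l|)^(-(1/2:ℝ)) * (1+t^2)^(-b) :=
          integral_mono_of_nonneg (ae_of_all _ gnn)
            (iC0.const_mul _) (ae_of_all _ key)
      _ = (1+|l|)^(-(1/2:ℝ)) * C0 := integral_const_mul _ _
      _ ≤ C * (1+|l|)^(-(1/2:ℝ)) := by
          rw [mul_comm]
          exact mul_le_mul_of_nonneg_right (by simp only [hCdef]; linarith) (by positivity)
  rcases le_or_gt l 1 with hl1 | hl1
  · -- Case 0 < l ≤ 1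
    have im1 : Integrable ((Icc (-2:ℝ) 2).indicator (fun _ => (1:ℝ))) := by
      rw [integrable_indicator_iff measurableSet_Icc]
      exact (integrableOn_const_iff).2 (Or.inr (by rw [Real.volume_Icc]; exact ENNReal.ofReal_lt_top))
    have im2 : Integrable (fun t : ℝ => 2^(2*b) * (1+t^2)^(-b)) := iC0.const_mul _
    have key : ∀ t : ℝ, (1 + |l - t^2|) ^ (-(2*b)) ≤
        (Icc (-2:ℝ) 2).indicator (fun _ => (1:ℝ)) t + 2^(2*b) * (1+t^2)^(-b) := by
      intro t
      rcases le_or_gt (|t|) 2 with ht | ht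
      · have h1 : (1 + |l - t^2|) ^ (-(2*b)) ≤ 1 :=
          Real.rpow_le_one_of_one_le_of_nonpos (by linarith [abs_nonneg (l - t^2)]) (by linarith)
        have h2 : (Icc (-2:ℝ) 2).indicator (fun _ => (1:ℝ)) t = 1 := by
          rw [indicator_of_mem]
          exact ⟨(abs_le.1 ht).1, (abs_le.1 ht).2⟩
        have h3 : (0:ℝ) ≤ 2^(2*b)*(1+t^2)^(-b) := by positivity
        rw [h2]; linarith
      · have ht2 : (4:ℝ) ≤ t^2 := by nlinarith [sq_abs t]
        have habs : |l - t^2| = t^2 - l := by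
          rw [abs_of_nonpos (by nlinarith)]; ring
        have h0 : (1+t^2)/2 ≤ 1 + |l - t^2| := by rw [habs]; nlinarith
        have h1 : (1 + |l - t^2|) ^ (-(2*b)) ≤ ((1+t^2)/2)^(-(2*b)) :=
          Real.rpow_le_rpow_of_nonpos (by positivity) h0 (by linarith)
        have h2 : ((1+t^2)/2)^(-(2*b)) = 2^(2*b) * (1+t^2)^(-(2*b)) := by
          rw [Real.div_rpow (by positivity) (by norm_num : (0:ℝ) ≤ 2),
            Real.rpow_neg (by norm_num : (0:ℝ) ≤ 2), div_eq_mul_inv, inv_inv, mul_comm]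
        have h3 : (1+t^2)^(-(2*b)) ≤ (1+t^2)^(-b) :=
          Real.rpow_le_rpow_of_exponent_le (by nlinarith [sq_nonneg t]) (by linarith)
        have h4 : (0:ℝ) ≤ (Icc (-2:ℝ) 2).indicator (fun _ => (1:ℝ)) t :=
          indicator_nonneg (fun _ _ => zero_le_one) t
        have h5 : 2^(2*b) * (1+t^2)^(-(2*b)) ≤ 2^(2*b) * (1+t^2)^(-b) :=
          mul_le_mul_of_nonneg_left h3 h2b
        nlinarith [h1.trans (h2.le.trans h5)]
    have hint : (∫ t : ℝ, (1 + |l - t^2|) ^ (-(2*b))) ≤ 4 + 2^(2*b) * C0 := by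
      calc (∫ t : ℝ, (1 + |l - t^2|) ^ (-(2*b)))
          ≤ ∫ t : ℝ, ((Icc (-2:ℝ) 2).indicator (fun _ => (1:ℝ)) t + 2^(2*b) * (1+t^2)^(-b)) :=
            integral_mono_of_nonneg (ae_of_all _ gnn)
              (im1.add im2) (ae_of_all _ key)
        _ = (∫ t : ℝ, (Icc (-2:ℝ) 2).indicator (fun _ => (1:ℝ)) t)
            + ∫ t : ℝ, 2^(2*b) * (1+t^2)^(-b) := integral_add im1 im2
        _ = 4 + 2^(2*b) * C0 := by
            rw [integral_indicator_const (1:ℝ) measurableSet_Icc, integral_const_mul,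
              measureReal_def, Real.volume_Icc]
            norm_num [ENNReal.toReal_ofReal, hC0]
    have e1 : |l| = l := abs_of_pos hl
    have h21 : (2:ℝ)^(-(1/2:ℝ)) ≤ (1+l)^(-(1/2:ℝ)) :=
      Real.rpow_le_rpow_of_nonpos (by linarith) (by linarith) (by norm_num)
    have hC2 : Real.sqrt 2 * (4 + 2^(2*b) * C0) ≤ C := by simp only [hCdef]; linarith
    have hmm : Real.sqrt 2 * (2:ℝ)^(-(1/2:ℝ)) = 1 := by
      rw [Real.sqrt_eq_rpow, ← Real.rpow_add (by norm_num : (0:ℝ) < 2)]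
      norm_num
    calc (∫ t : ℝ, (1 + |l - t^2|) ^ (-(2*b)))
        ≤ 4 + 2^(2*b) * C0 := hint
      _ = (Real.sqrt 2 * (4 + 2^(2*b) * C0)) * (2:ℝ)^(-(1/2:ℝ)) := by
          rw [mul_comm (Real.sqrt 2), mul_assoc, hmm, mul_one]
      _ ≤ C * (1+l)^(-(1/2:ℝ)) :=
          mul_le_mul hC2 h21 (by positivity) hCpos.le
      _ = C * (1+|l|)^(-(1/2:ℝ)) := by rw [e1]
  · -- Case 1 < l
    have hl0 : (0:ℝ) < l := hl
    have hs : (Real.sqrt l)^2 = l := Real.sq_sqrt hl0.le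
    have hsn : 0 ≤ Real.sqrt l := Real.sqrt_nonneg l
    set s : ℝ := Real.sqrt l with hsdef
    have hs1 : 1 < s := by
      rw [hsdef, show (1:ℝ) = Real.sqrt 1 by simp]
      exact Real.sqrt_lt_sqrt (by norm_num) hl1
    have hs0 : 0 < s := by linarith
    obtain ⟨i1, e1⟩ := scaled hp hs0 (-s)
    obtain ⟨i2, e2⟩ := scaled hp hs0 s
    rw [← hM] at e1 e2
    have key : ∀ t : ℝ, (1 + |l - t^2|) ^ (-(2*b)) ≤
        (1 + |s*(t + -s)|) ^ (-(2*b)) + (1 + |s*(t + s)|) ^ (-(2*b)) := by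
      intro t
      rcases le_or_gt 0 t with ht | ht
      · have e3 : |l - t^2| = |s - t| * (s + t) := by
          rw [(by rw [← hs]; ring : l - t^2 = (s - t)*(s + t)), abs_mul,
            abs_of_nonneg (show (0:ℝ) ≤ s + t by linarith)]
        have e4 : |s*(t + -s)| = s * |s - t| := by
          rw [abs_mul, abs_of_pos hs0, ← sub_eq_add_neg, abs_sub_comm]
        have h4 : 1 + |s*(t + -s)| ≤ 1 + |l - t^2| := by
          rw [e3, e4]
          nlinarith [mul_le_mul_of_nonneg_left
            (show s ≤ s + t by linarith) (abs_nonneg (s - t))]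
        have h5 : (1 + |l - t^2|) ^ (-(2*b)) ≤ (1 + |s*(t + -s)|) ^ (-(2*b)) :=
          Real.rpow_le_rpow_of_nonpos (by positivity) h4 (by linarith)
        have h6 : (0:ℝ) ≤ (1 + |s*(t + s)|) ^ (-(2*b)) := by positivity
        linarith
      · have e3 : |l - t^2| = |s + t| * (s - t) := by
          rw [(by rw [← hs]; ring : l - t^2 = (s + t)*(s - t)), abs_mul,
            abs_of_nonneg (show (0:ℝ) ≤ s - t by linarith)]
        have e4 : |s*(t + s)| = s * |s + t| := by
          rw [abs_mul, abs_of_pos hs0, add_comm]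
        have h4 : 1 + |s*(t + s)| ≤ 1 + |l - t^2| := by
          rw [e3, e4]
          nlinarith [mul_le_mul_of_nonneg_left
            (show s ≤ s - t by linarith) (abs_nonneg (s + t))]
        have h5 : (1 + |l - t^2|) ^ (-(2*b)) ≤ (1 + |s*(t + s)|) ^ (-(2*b)) :=
          Real.rpow_le_rpow_of_nonpos (by positivity) h4 (by linarith)
        have h6 : (0:ℝ) ≤ (1 + |s*(t + -s)|) ^ (-(2*b)) := by positivity
        linarith
    have hint : (∫ t : ℝ, (1 + |l - t^2|) ^ (-(2*b))) ≤ 2 * M * s⁻¹ := by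
      calc (∫ t : ℝ, (1 + |l - t^2|) ^ (-(2*b)))
          ≤ ∫ t : ℝ, ((1 + |s*(t + -s)|) ^ (-(2*b)) + (1 + |s*(t + s)|) ^ (-(2*b))) :=
            integral_mono_of_nonneg (ae_of_all _ gnn) (i1.add i2) (ae_of_all _ key)
        _ = (∫ t : ℝ, (1 + |s*(t + -s)|) ^ (-(2*b)))
            + ∫ t : ℝ, (1 + |s*(t + s)|) ^ (-(2*b)) := integral_add i1 i2
        _ = 2 * M * s⁻¹ := by rw [e1, e2]; ring
    have hpos : 0 < Real.sqrt (1+l) := Real.sqrt_pos.2 (by linarith)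
    have hsl : Real.sqrt (1+l) ≤ Real.sqrt 2 * s := by
      rw [hsdef, ← Real.sqrt_mul (by norm_num : (0:ℝ) ≤ 2)]
      exact Real.sqrt_le_sqrt (by linarith)
    have h2 : s⁻¹ ≤ Real.sqrt 2 * (Real.sqrt (1+l))⁻¹ := by
      rw [mul_comm, ← div_eq_inv_mul, inv_eq_one_div, div_le_div_iff₀ hs0 hpos]
      nlinarith [hsl]
    have erw1 : (1:ℝ)+|l| = 1 + l := by rw [abs_of_pos hl0]
    have erw2 : ((1:ℝ)+l)^(-(1/2:ℝ)) = (Real.sqrt (1+l))⁻¹ := by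
      rw [Real.rpow_neg (by linarith), ← Real.sqrt_eq_rpow]
    calc (∫ t : ℝ, (1 + |l - t^2|) ^ (-(2*b)))
        ≤ 2 * M * s⁻¹ := hint
      _ ≤ 2 * M * (Real.sqrt 2 * (Real.sqrt (1+l))⁻¹) :=
          mul_le_mul_of_nonneg_left h2 (by positivity)
      _ = (2 * Real.sqrt 2 * M) * (Real.sqrt (1+l))⁻¹ := by ring
      _ ≤ C * (Real.sqrt (1+l))⁻¹ :=
          mul_le_mul_of_nonneg_right (by simp only [hCdef]; linarith) (by positivity)
      _ = C * (1+|l|)^(-(1/2:ℝ)) := by rw [erw1, erw2]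


lemma quad (b : ℝ) {a : ℝ} (ha : 0 < a) (l : ℝ) :
    (∫ t : ℝ, (1 + |l - a*t^2|) ^ (-(2*b))) =
      (Real.sqrt a)⁻¹ * ∫ t : ℝ, (1 + |l - t^2|) ^ (-(2*b)) := by
  have hsa : Real.sqrt a * Real.sqrt a = a := Real.mul_self_sqrt ha.le
  have h := MeasureTheory.Measure.integral_comp_mul_left
    (fun t : ℝ => (1 + |l - t^2|) ^ (-(2*b))) (Real.sqrt a)
  simp only [mul_pow] at h
  rw [abs_of_pos (inv_pos.2 (Real.sqrt_pos.2 ha)), smul_eq_mul] at h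
  rw [← h]
  congr 1; funext t
  rw [show Real.sqrt a ^ 2 = a from by rw [sq, hsa]]

end helpers

theorem stmt_4 (b : ℝ) (hb : 1/2 < b) :
    ∃ C > 0, ∀ (ξ τ : ℝ), ξ ≠ 0 →
      ∫ ξ1 : ℝ, 1 / (1 + |τ - ξ1^3 - (ξ - ξ1)^3|) ^ (2*b) ≤
        C / (Real.sqrt |ξ| * (1 + |4*τ - ξ^3|) ^ ((1:ℝ)/2)) := by
  obtain ⟨C, hC, hcore⟩ := core hb
  refine ⟨2*C, by linarith, ?_⟩
  intro ξ τ hξ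
  set l : ℝ := τ - ξ^3/4 with hl
  have eq1 : (∫ ξ1 : ℝ, 1 / (1 + |τ - ξ1^3 - (ξ - ξ1)^3|) ^ (2*b)) =
      ∫ ξ1 : ℝ, (1 + |τ - ξ1^3 - (ξ - ξ1)^3|) ^ (-(2*b)) := by
    congr 1; funext x
    rw [Real.rpow_neg (by positivity), one_div]
  have eq2 : (∫ ξ1 : ℝ, (1 + |τ - ξ1^3 - (ξ - ξ1)^3|) ^ (-(2*b))) =
      ∫ t : ℝ, (1 + |l - 3*ξ*t^2|) ^ (-(2*b)) := by
    rw [← integral_add_right_eq_self (μ := volume)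
      (fun x : ℝ => (1 + |τ - x^3 - (ξ - x)^3|) ^ (-(2*b))) (ξ/2)]
    congr 1; funext t
    rw [show τ - (t + ξ/2)^3 - (ξ - (t + ξ/2))^3 = l - 3*ξ*t^2 from by rw [hl]; ring]
  -- bound the middle integral
  have hmid : (∫ t : ℝ, (1 + |l - 3*ξ*t^2|) ^ (-(2*b))) ≤
      (Real.sqrt (3*|ξ|))⁻¹ * (C * (1 + |l|) ^ (-(1/2:ℝ))) := by
    rcases hξ.lt_or_gt with hneg | hpos
    · have habs : |ξ| = -ξ := abs_of_neg hneg
      have e : (∫ t : ℝ, (1 + |l - 3*ξ*t^2|) ^ (-(2*b))) =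
          ∫ t : ℝ, (1 + |(-l) - (3*(-ξ))*t^2|) ^ (-(2*b)) := by
        congr 1; funext t
        rw [show (-l) - (3*(-ξ))*t^2 = -(l - 3*ξ*t^2) from by ring, abs_neg]
      rw [e, quad b (by linarith : (0:ℝ) < 3*(-ξ)) (-l), habs]
      have := hcore (-l)
      rw [abs_neg] at this
      exact mul_le_mul_of_nonneg_left this (by positivity)
    · rw [show (3:ℝ)*|ξ| = 3*ξ from by rw [abs_of_pos hpos],
        quad b (by linarith : (0:ℝ) < 3*ξ) l]
      exact mul_le_mul_of_nonneg_left (hcore l) (by positivity)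
  -- final algebra
  have hX : 0 < Real.sqrt |ξ| := Real.sqrt_pos.2 (abs_pos.2 hξ)
  set Y : ℝ := (1 + |4*τ - ξ^3|) ^ ((1:ℝ)/2) with hY
  have hY1 : 0 < Y := by rw [hY]; positivity
  have hinv : (Real.sqrt (3*|ξ|))⁻¹ ≤ (Real.sqrt |ξ|)⁻¹ := by
    apply inv_anti₀ hX
    exact Real.sqrt_le_sqrt (by linarith [abs_nonneg ξ])
  have h4l : |4*τ - ξ^3| = 4*|l| := by
    rw [show 4*τ - ξ^3 = 4*l from by rw [hl]; ring, abs_mul]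
    norm_num
  have hz : 0 < (1+|l|) := by positivity
  have hYle : Y ≤ 2 * (1+|l|) ^ ((1:ℝ)/2) := by
    rw [hY]
    calc (1 + |4*τ - ξ^3|) ^ ((1:ℝ)/2) ≤ (4*(1+|l|)) ^ ((1:ℝ)/2) := by
          apply Real.rpow_le_rpow (by positivity) _ (by norm_num)
          rw [h4l]; linarith [abs_nonneg l]
      _ = 2 * (1+|l|) ^ ((1:ℝ)/2) := by
          rw [Real.mul_rpow (by norm_num) hz.le,
            show (4:ℝ) = 2^(2:ℕ) from by norm_num, ← Real.rpow_natCast 2 2,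
            ← Real.rpow_mul (by norm_num : (0:ℝ) ≤ 2)]
          norm_num
  have hneg : (1+|l|) ^ (-(1/2:ℝ)) ≤ 2 / Y := by
    rw [show (-(1/2:ℝ)) = -((1:ℝ)/2) from by norm_num, Real.rpow_neg hz.le]
    rw [inv_eq_one_div, div_le_div_iff₀ (by positivity) hY1]
    calc 1 * Y = Y := one_mul Y
      _ ≤ 2 * (1+|l|) ^ ((1:ℝ)/2) := hYle
  calc (∫ ξ1 : ℝ, 1 / (1 + |τ - ξ1^3 - (ξ - ξ1)^3|) ^ (2*b))
      = ∫ t : ℝ, (1 + |l - 3*ξ*t^2|) ^ (-(2*b)) := by rw [eq1, eq2]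
    _ ≤ (Real.sqrt (3*|ξ|))⁻¹ * (C * (1 + |l|) ^ (-(1/2:ℝ))) := hmid
    _ ≤ (Real.sqrt |ξ|)⁻¹ * (C * (2 / Y)) := by
        apply mul_le_mul hinv (mul_le_mul_of_nonneg_left hneg hC.le) (by positivity)
          (by positivity)
    _ = 2*C / (Real.sqrt |ξ| * Y) := by
        field_simp
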